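/- Complete tripartite graphs K_{x,y,z} and K_{p,q,r} have the same Seidel spectrum if and only if x + y + z = p + q + r and xyz = pqr. -/

import Mathlib

open Polynomial Matrix

open scoped Classical in
/-- The Seidel matrix of a simple graph: 0 on the diagonal, -1 for adjacent pairs,
1 for distinct non-adjacent pairs. -/
noncomputable def seidel {V : Type*} [Fintype V] (G : SimpleGraph V) : Matrix V V ℝ :=
  fun i j => if i = j then 0 else if G.Adj i j then -1 else 1

/-- The complete multipartite graph with parts of sizes `p 0, ..., p (k-1)`. -/
def completeMultipartite {k : ℕ} (p : Fin k → ℕ) : SimpleGraph (Σ i : Fin k, Fin (p i)) where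
  Adj u v := u.1 ≠ v.1
  symm := ⟨fun _ _ h => h.symm⟩
  loopless := ⟨fun _ h => h rfl⟩

lemma seidel_cm_apply {k : ℕ} (p : Fin k → ℕ) (u v : Σ i : Fin k, Fin (p i)) :
    seidel (completeMultipartite p) u v
      = if u = v then 0 else if u.1 = v.1 then 1 else -1 := by
  unfold seidel
  by_cases h : u = v
  · simp [h]
  · simp only [h, if_false]
    by_cases h2 : u.1 = v.1
    · rw [if_neg (fun hadj => hadj h2), if_pos h2]
    · rw [if_pos (show (completeMultipartite p).Adj u v from h2), if_neg h2]

lemma eval_charpoly' {n : Type*} [Fintype n] [DecidableEq n] (M : Matrix n n ℝ) (t : ℝ) :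
    M.charpoly.eval t = (t • (1 : Matrix n n ℝ) - M).det := by
  rw [Matrix.charpoly, _root_.eval_det, Matrix.matPolyEquiv_charmatrix, eval_sub, eval_X, eval_C]
  congr 1
  ext i j
  simp [Matrix.scalar, Matrix.smul_apply, Matrix.one_apply, Matrix.diagonal]

lemma card_V3 (a b c : ℕ) : Fintype.card (Σ i : Fin 3, Fin (![a, b, c] i)) = a + b + c := by
  simp [Fintype.card_sigma, Fin.sum_univ_three]

lemma det_key (a b c : ℕ) (t : ℝ) (ht : t + 1 ≠ 0) :
    (t • (1 : Matrix (Σ i : Fin 3, Fin (![a,b,c] i)) (Σ i : Fin 3, Fin (![a,b,c] i)) ℝ)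
        - seidel (completeMultipartite ![a,b,c])).det
      = (t+1) ^ (a+b+c) *
        ((1 - (t+1)⁻¹*a) * ((1 - (t+1)⁻¹*b) * (1 - (t+1)⁻¹*c) - ((t+1)⁻¹*c) * ((t+1)⁻¹*b))
          - ((t+1)⁻¹*b) * (((t+1)⁻¹*a) * (1 - (t+1)⁻¹*c) - ((t+1)⁻¹*c) * ((t+1)⁻¹*a))
          + ((t+1)⁻¹*c) * (((t+1)⁻¹*a) * ((t+1)⁻¹*b) - (1 - (t+1)⁻¹*b) * ((t+1)⁻¹*a))) := by
  classical
  set S := seidel (completeMultipartite ![a,b,c]) with hSdef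
  have hS : ∀ u v : Σ i : Fin 3, Fin (![a,b,c] i),
      S u v = if u = v then 0 else if u.1 = v.1 then 1 else -1 := seidel_cm_apply _
  set U : Matrix (Σ i : Fin 3, Fin (![a,b,c] i)) (Fin 3) ℝ :=
    Matrix.of fun v i => if v.1 = i then 1 else 0 with hU
  set W : Matrix (Fin 3) (Σ i : Fin 3, Fin (![a,b,c] i)) ℝ :=
    Matrix.of fun i v => if v.1 = i then -1 else 1 with hW
  have h1 : t • (1 : Matrix _ _ ℝ) - S = (t+1) • (1 + ((t+1)⁻¹ • U) * W) := by
    have h0 : t • (1 : Matrix _ _ ℝ) - S = (t+1) • 1 + U * W := by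
      ext u v
      have hsum : (U * W) u v = if v.1 = u.1 then -1 else 1 := by
        rw [Matrix.mul_apply]
        rw [Finset.sum_eq_single u.1]
        · simp [hU, hW]
        · intro i _ hi
          simp [hU, hW, Ne.symm hi]
        · simp
      simp only [Matrix.sub_apply, Matrix.add_apply, Matrix.smul_apply, smul_eq_mul, hsum, hS u v,
        Matrix.one_apply]
      by_cases huv : u = v
      · subst huv; simp
      · by_cases h2 : u.1 = v.1
        · simp [huv, h2]
        · have h2' : ¬ v.1 = u.1 := fun h => h2 h.symm
          simp [huv, h2, h2']
    rw [h0, smul_add, Matrix.smul_mul, smul_smul, mul_inv_cancel₀ ht, one_smul]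
  rw [h1, Matrix.det_smul, Matrix.det_one_add_mul_comm]
  rw [card_V3]
  congr 1
  have hent : ∀ i j : Fin 3, (W * ((t+1)⁻¹ • U)) i j
      = (t+1)⁻¹ * ((![a,b,c] j : ℝ) * (if i = j then -1 else 1)) := by
    intro i j
    rw [Matrix.mul_apply]
    rw [← Finset.univ_sigma_univ, Finset.sum_sigma]
    have : ∀ k : Fin 3, ∑ w : Fin (![a,b,c] k),
        W i ⟨k, w⟩ * ((t+1)⁻¹ • U) ⟨k, w⟩ j
        = (![a,b,c] k : ℝ) * ((if k = i then -1 else 1) * ((t+1)⁻¹ * if k = j then 1 else 0)) := by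
      intro k
      simp only [hW, hU, Matrix.smul_apply, Matrix.of_apply, smul_eq_mul]
      simp [Finset.sum_const, mul_comm, mul_assoc, mul_left_comm]
    rw [Finset.sum_congr rfl fun k _ => this k]
    rw [Fin.sum_univ_three]
    fin_cases i <;> fin_cases j <;> norm_num [Fin.ext_iff, Matrix.cons_val, Matrix.cons_val_two, Matrix.tail_cons, Matrix.head_cons] <;> ring
  rw [Matrix.det_fin_three]
  simp only [Matrix.add_apply, hent, Matrix.one_apply]
  norm_num [Fin.ext_iff, Matrix.cons_val, Matrix.cons_val_two, Matrix.tail_cons, Matrix.head_cons]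
  ring

lemma seidel_cm_charpoly (a b c : ℕ) (ha : 1 ≤ a) (hb : 1 ≤ b) (hc : 1 ≤ c) :
    (seidel (completeMultipartite ![a, b, c])).charpoly =
      (X + 1) ^ (a + b + c - 3) *
        (X ^ 3 + C (3 - ((a : ℝ) + b + c)) * X ^ 2 + C (3 - 2 * ((a : ℝ) + b + c)) * X
          + C (4 * ((a : ℝ) * b * c) - ((a : ℝ) + b + c) + 1)) := by
  apply Polynomial.eq_of_infinite_eval_eq
  have hinf : ({(-1 : ℝ)}ᶜ : Set ℝ).Infinite := (Set.finite_singleton _).infinite_compl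
  refine hinf.mono ?_
  intro t ht
  have ht1 : t + 1 ≠ 0 := by
    intro h
    exact ht (by simp only [Set.mem_singleton_iff]; linarith)
  simp only [Set.mem_setOf_eq]
  rw [eval_charpoly', det_key a b c t ht1]
  simp only [eval_mul, eval_pow, eval_add, eval_X, eval_one, eval_C]
  obtain ⟨m, hm⟩ : ∃ m, a + b + c = m + 3 := ⟨a + b + c - 3, by omega⟩
  rw [hm, Nat.add_sub_cancel, pow_add, mul_assoc]
  congr 1
  field_simp
  ring

/-- The complete tripartite graphs `K_{x,y,z}` and `K_{p,q,r}` have the same Seidel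
spectrum (equal characteristic polynomials of their Seidel matrices) if and only if
`x + y + z = p + q + r` and `xyz = pqr`. -/
theorem tripartite_seidel_cospectral_iff (x y z p q r : ℕ)
    (hx : 1 ≤ x) (hy : 1 ≤ y) (hz : 1 ≤ z) (hp : 1 ≤ p) (hq : 1 ≤ q) (hr : 1 ≤ r) :
    (seidel (completeMultipartite ![x, y, z])).charpoly =
      (seidel (completeMultipartite ![p, q, r])).charpoly ↔
    (x + y + z = p + q + r ∧ x * y * z = p * q * r) := by
  constructor
  · intro h
    have hdeg := congrArg Polynomial.natDegree h
    rw [Matrix.charpoly_natDegree_eq_dim, Matrix.charpoly_natDegree_eq_dim, card_V3, card_V3]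
      at hdeg
    refine ⟨hdeg, ?_⟩
    have h0 := congrArg (Polynomial.eval 0) h
    rw [seidel_cm_charpoly x y z hx hy hz, seidel_cm_charpoly p q r hp hq hr] at h0
    simp only [eval_mul, eval_pow, eval_add, eval_X, eval_one, eval_C, zero_add, one_pow,
      zero_pow, mul_zero, zero_mul, add_zero] at h0
    have hsum : (x : ℝ) + y + z = (p : ℝ) + q + r := by exact_mod_cast hdeg
    have hprod : (x : ℝ) * y * z = (p : ℝ) * q * r := by nlinarith [h0, hsum]
    exact_mod_cast hprod
  · rintro ⟨h1, h2⟩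
    rw [seidel_cm_charpoly x y z hx hy hz, seidel_cm_charpoly p q r hp hq hr]
    have e1 : (x : ℝ) + y + z = (p : ℝ) + q + r := by exact_mod_cast h1
    have e2 : (x : ℝ) * y * z = (p : ℝ) * q * r := by exact_mod_cast h2
    rw [show x + y + z - 3 = p + q + r - 3 from by rw [h1], e1, e2]
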